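/- Let n ≥ 3 and let A be a primitive (0,1) companion matrix of order n with zero trace (a_{n,n} = 0). Then exp(A:n) < exp(A:n-1) < ... < exp(A:1), and consequently exp(A) = exp(A:1). -/

import Mathlib

open Matrix BigOperators

/-- A nonnegative square matrix is primitive if some positive power has all entries positive. -/
def IsPrimitive {n : ℕ} (A : Matrix (Fin n) (Fin n) ℝ) : Prop :=
  ∃ m : ℕ, 0 < m ∧ ∀ i j, 0 < (A ^ m) i j

/-- The exponent of a primitive matrix: the least positive `m` with `A ^ m > 0`. -/
noncomputable def matExp {n : ℕ} (A : Matrix (Fin n) (Fin n) ℝ) : ℕ :=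
  sInf {m : ℕ | 0 < m ∧ ∀ i j, 0 < (A ^ m) i j}

/-- `(0,1)` companion matrix: superdiagonal ones on the first `n-1` rows,
arbitrary `(0,1)` last row, all other entries zero. -/
def IsCompanion {n : ℕ} (A : Matrix (Fin n) (Fin n) ℝ) : Prop :=
  (∀ i j, A i j = 0 ∨ A i j = 1) ∧
  (∀ i j : Fin n, (i : ℕ) + 1 < n → (A i j = 1 ↔ (j : ℕ) = (i : ℕ) + 1))

/-- `exp(A:i,j)`: least positive `k` such that `(A^l) i j > 0` for all `l ≥ k`. -/
noncomputable def expIJ {n : ℕ} (A : Matrix (Fin n) (Fin n) ℝ) (i j : Fin n) : ℕ :=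
  sInf {k : ℕ | 0 < k ∧ ∀ l, k ≤ l → 0 < (A ^ l) i j}

/-- `exp(A:i)`: least positive `p` such that every entry of row `i` of `A ^ p` is positive. -/
noncomputable def expRow {n : ℕ} (A : Matrix (Fin n) (Fin n) ℝ) (i : Fin n) : ℕ :=
  sInf {p : ℕ | 0 < p ∧ ∀ j, 0 < (A ^ p) i j}

/-- The digraph of `A` has an elementary cycle of length `k`. -/
def HasElemCycle {n : ℕ} (A : Matrix (Fin n) (Fin n) ℝ) (k : ℕ) : Prop :=
  0 < k ∧ ∃ c : ℕ → Fin n, c k = c 0 ∧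
    (∀ i j, i < k → j < k → c i = c j → i = j) ∧
    ∀ i < k, A (c i) (c (i + 1)) = 1

/-- `m(U)`: the maximal length of a run of consecutive integers contained in `U`. -/
noncomputable def runMax (U : Set ℕ) : ℕ :=
  sSup {k : ℕ | ∃ a : ℕ, ∀ t < k, a + t ∈ U}

/-- The Frobenius number of a set `L`: the least `N` such that every `m ≥ N` is a
nonnegative integer combination of elements of `L`. -/
noncomputable def frobNum (L : Set ℕ) : ℕ :=
  sInf {N : ℕ | ∀ m, N ≤ m → m ∈ AddSubmonoid.closure L}

/-- Irreducibility: for all `i j` there is a walk of some positive length from `i` to `j`. -/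
def IsIrreducibleMat {n : ℕ} (A : Matrix (Fin n) (Fin n) ℝ) : Prop :=
  ∀ i j, ∃ k : ℕ, 0 < k ∧ 0 < (A ^ k) i j


section Helpers

variable {n : ℕ} {A : Matrix (Fin n) (Fin n) ℝ}

lemma entry_nonneg (hA : IsCompanion A) (i j : Fin n) : 0 ≤ A i j := by
  rcases hA.1 i j with h | h <;> rw [h] <;> norm_num

lemma powEntry_nonneg (hA : IsCompanion A) (l : ℕ) (i j : Fin n) : 0 ≤ (A ^ l) i j := by
  induction l generalizing i j with
  | zero =>
      simp only [pow_zero, Matrix.one_apply]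
      split <;> norm_num
  | succ l ih =>
      rw [pow_succ, Matrix.mul_apply]
      exact Finset.sum_nonneg fun k _ => mul_nonneg (ih i k) (entry_nonneg hA k _)

lemma rowstep (hA : IsCompanion A) (i : Fin n) (hi : (i : ℕ) + 1 < n) (p : ℕ) (j : Fin n) :
    (A ^ (p + 1)) i j = (A ^ p) ⟨(i : ℕ) + 1, hi⟩ j := by
  rw [pow_succ', Matrix.mul_apply]
  rw [Finset.sum_eq_single (⟨(i : ℕ) + 1, hi⟩ : Fin n)]
  · rw [(hA.2 i ⟨(i : ℕ) + 1, hi⟩ hi).2 rfl, one_mul]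
  · intro k _ hk
    rcases hA.1 i k with h | h
    · rw [h, zero_mul]
    · exact absurd (Fin.ext ((hA.2 i k hi).1 h)) hk
  · intro h; exact absurd (Finset.mem_univ _) h

lemma col_one (hn : 3 ≤ n) (hA : IsCompanion A)
    (h1 : A ⟨n - 1, Nat.sub_one_lt (by omega)⟩ ⟨0, Nat.pos_of_ne_zero (by omega)⟩ = 1) (j : Fin n) :
    ∃ k : Fin n, A k j = 1 := by
  by_cases hj : (j : ℕ) = 0
  · refine ⟨⟨n - 1, Nat.sub_one_lt (by omega)⟩, ?_⟩
    have : j = ⟨0, Nat.pos_of_ne_zero (by omega)⟩ := Fin.ext hj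
    rw [this]; exact h1
  · have hjn : (j : ℕ) < n := j.isLt
    refine ⟨⟨(j : ℕ) - 1, by omega⟩, ?_⟩
    exact (hA.2 ⟨(j : ℕ) - 1, by omega⟩ j (show (j : ℕ) - 1 + 1 < n by omega)).2
      (show (j : ℕ) = (j : ℕ) - 1 + 1 by omega)

lemma row_pos_succ (hn : 3 ≤ n) (hA : IsCompanion A)
    (h1 : A ⟨n - 1, Nat.sub_one_lt (by omega)⟩ ⟨0, Nat.pos_of_ne_zero (by omega)⟩ = 1) (i : Fin n) (l : ℕ)
    (h : ∀ j, 0 < (A ^ l) i j) : ∀ j, 0 < (A ^ (l + 1)) i j := by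
  intro j
  obtain ⟨k0, hk0⟩ := col_one hn hA h1 j
  rw [pow_succ, Matrix.mul_apply]
  calc (0 : ℝ) < (A ^ l) i k0 * A k0 j := by rw [hk0, mul_one]; exact h k0
    _ ≤ ∑ k, (A ^ l) i k * A k j :=
        Finset.single_le_sum
          (fun k _ => mul_nonneg (powEntry_nonneg hA l i k) (entry_nonneg hA k j))
          (Finset.mem_univ k0)

lemma row_pos_mono (hn : 3 ≤ n) (hA : IsCompanion A)
    (h1 : A ⟨n - 1, Nat.sub_one_lt (by omega)⟩ ⟨0, Nat.pos_of_ne_zero (by omega)⟩ = 1) (i : Fin n) {l l' : ℕ}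
    (hll : l ≤ l') (h : ∀ j, 0 < (A ^ l) i j) : ∀ j, 0 < (A ^ l') i j := by
  induction l' , hll using Nat.le_induction with
  | base => exact h
  | succ l' hl ih => exact row_pos_succ hn hA h1 i l' ih

lemma expRow_mem (hP : _root_.IsPrimitive A) (i : Fin n) :
    0 < expRow A i ∧ ∀ j, 0 < (A ^ expRow A i) i j := by
  obtain ⟨m, hm, hpos⟩ := hP
  exact Nat.sInf_mem (⟨m, hm, fun j => hpos i j⟩ :
    Set.Nonempty {p : ℕ | 0 < p ∧ ∀ j, 0 < (A ^ p) i j})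

lemma expRow_shift (hn : 3 ≤ n) (hA : IsCompanion A) (hP : _root_.IsPrimitive A)
    (i : Fin n) (hi : (i : ℕ) + 1 < n) :
    expRow A i = expRow A ⟨(i : ℕ) + 1, hi⟩ + 1 := by
  set i' : Fin n := ⟨(i : ℕ) + 1, hi⟩
  apply le_antisymm
  · apply Nat.sInf_le
    refine ⟨Nat.succ_pos _, fun j => ?_⟩
    rw [rowstep hA i hi]
    exact (expRow_mem hP i').2 j
  · obtain ⟨hp, hpos⟩ := expRow_mem hP i
    set p := expRow A i with hpdef
    have hp2 : 2 ≤ p := by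
      by_contra hcon
      have hp1 : p = 1 := by omega
      have h0 : (0 : ℝ) < (A ^ p) i ⟨0, Nat.pos_of_ne_zero (by omega)⟩ := hpos _
      rw [hp1, pow_one] at h0
      rcases hA.1 i ⟨0, Nat.pos_of_ne_zero (by omega)⟩ with h | h
      · rw [h] at h0; exact lt_irrefl 0 h0
      · have h2 := (hA.2 i ⟨0, Nat.pos_of_ne_zero (by omega)⟩ hi).1 h
        simp only [Fin.val_mk] at h2
        omega
    have hmem : p - 1 ∈ {q : ℕ | 0 < q ∧ ∀ j, 0 < (A ^ q) i' j} := by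
      refine ⟨by omega, fun j => ?_⟩
      have hj := hpos j
      have hpe : p = (p - 1) + 1 := by omega
      rw [hpe, rowstep hA i hi] at hj
      exact hj
    have hle : expRow A i' ≤ p - 1 := Nat.sInf_le hmem
    omega

lemma expRow_shift_nat (hn : 3 ≤ n) (hA : IsCompanion A) (hP : _root_.IsPrimitive A)
    (a : ℕ) (h : a + 1 < n) :
    expRow A ⟨a, by omega⟩ = expRow A ⟨a + 1, h⟩ + 1 :=
  expRow_shift hn hA hP ⟨a, by omega⟩ h

end Helpers

theorem stmt9 {n : ℕ} (hn : 3 ≤ n) (A : Matrix (Fin n) (Fin n) ℝ)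
    (hA : IsCompanion A) (hP : _root_.IsPrimitive A)
    (h1 : A ⟨n - 1, by omega⟩ ⟨0, by omega⟩ = 1)
    (htr : A ⟨n - 1, by omega⟩ ⟨n - 1, by omega⟩ = 0) :
    (∀ i j : Fin n, i < j → expRow A j < expRow A i) ∧
      matExp A = expRow A ⟨0, by omega⟩ := by
  have key : ∀ d a : ℕ, ∀ h : a + d + 1 < n,
      expRow A ⟨a + d + 1, h⟩ < expRow A ⟨a, by omega⟩ := by
    intro d
    induction d with
    | zero =>
        intro a h
        rw [expRow_shift_nat hn hA hP a (show a + 1 < n by omega)]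
        exact Nat.lt_succ_self _
    | succ d ih =>
        intro a h
        have h' : (a + 1) + d + 1 < n := by omega
        have ih' := ih (a + 1) h'
        have hfe : (⟨a + (d + 1) + 1, h⟩ : Fin n) = ⟨(a + 1) + d + 1, h'⟩ :=
          Fin.ext (show a + (d + 1) + 1 = (a + 1) + d + 1 by omega)
        rw [hfe, expRow_shift_nat hn hA hP a (show a + 1 < n by omega)]
        exact lt_trans ih' (Nat.lt_succ_self _)
  have hchain : ∀ i j : Fin n, i < j → expRow A j < expRow A i := by
    intro i j hij
    have hv : (i : ℕ) < (j : ℕ) := hij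
    have hjn : (j : ℕ) < n := j.isLt
    have hj' : j = ⟨(i : ℕ) + ((j : ℕ) - (i : ℕ) - 1) + 1, by omega⟩ :=
      Fin.ext (show (j : ℕ) = (i : ℕ) + ((j : ℕ) - (i : ℕ) - 1) + 1 by omega)
    rw [hj']
    exact key ((j : ℕ) - (i : ℕ) - 1) (i : ℕ) (by omega)
  refine ⟨hchain, ?_⟩
  have hne : Set.Nonempty {m : ℕ | 0 < m ∧ ∀ i j, 0 < (A ^ m) i j} := hP
  have hmem := Nat.sInf_mem hne
  apply le_antisymm
  · -- matExp A ≤ expRow A 0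
    apply Nat.sInf_le
    refine ⟨(expRow_mem hP ⟨0, by omega⟩).1, fun i j => ?_⟩
    have hle : expRow A i ≤ expRow A ⟨0, by omega⟩ := by
      by_cases hi0 : (i : ℕ) = 0
      · have : i = ⟨0, by omega⟩ := Fin.ext hi0
        rw [this]
      · exact le_of_lt (hchain ⟨0, by omega⟩ i (show (0 : ℕ) < (i : ℕ) by omega))
    exact row_pos_mono hn hA h1 i hle (expRow_mem hP i).2 j
  · -- expRow A 0 ≤ matExp A
    exact Nat.sInf_le ⟨hmem.1, fun j => hmem.2 _ j⟩
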